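/- Let n ≥ 1, let R be a commutative ring, and let A be an n × n matrix over R indexed by ZMod n. Then det A = Σ_{σ : σ(0)=0} Σ_{r ∈ ZMod n} sign(σ ∘ ρ_r) · Π_{i ∈ ZMod n} A((σ ∘ ρ_r)(i), i); that is, the Leibniz expansion of the determinant is recovered by summing, over the (n−1)! canonical representatives σ, the n signed monomials of each cyclic orbit. -/

import Mathlib

open Equiv

/-- Correctness of the orbital method: for `n ≥ 1` the Leibniz expansion of the
determinant of an `n × n` matrix indexed by `ZMod n` is recovered by summing, over
the `(n−1)!` canonical representatives `σ` (those with `σ 0 = 0`), the `n` signed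
monomials of each cyclic orbit. -/
theorem stmt_7 (n : ℕ) [NeZero n] (R : Type*) [CommRing R]
    (A : Matrix (ZMod n) (ZMod n) R) :
    A.det = ∑ σ ∈ Finset.univ.filter (fun σ : Equiv.Perm (ZMod n) => σ 0 = 0),
      ∑ r : ZMod n,
        ((Equiv.Perm.sign (σ * (Equiv.addRight r : Equiv.Perm (ZMod n))) : ℤ) : R) *
          ∏ i : ZMod n, A ((σ * (Equiv.addRight r : Equiv.Perm (ZMod n))) i) i := by
  rw [Matrix.det_apply, ← Finset.sum_product']
  refine Finset.sum_nbij' (i := fun τ => (τ * Equiv.addRight (τ⁻¹ 0), -(τ⁻¹ 0)))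
    (j := fun p => p.1 * Equiv.addRight p.2) ?_ ?_ ?_ ?_ ?_
  · intro τ _
    simp [Finset.mem_product, Equiv.Perm.mul_apply]
  · intro p _
    exact Finset.mem_univ _
  · intro τ _
    ext x
    simp [Equiv.Perm.mul_apply]
  · intro p hp
    simp only [Finset.mem_product, Finset.mem_filter] at hp
    have h0 : (p.1 * Equiv.addRight p.2)⁻¹ 0 = -p.2 := by
      rw [Equiv.Perm.inv_eq_iff_eq]
      simp [Equiv.Perm.mul_apply, hp.1.2]
    have h1 : p.1⁻¹ 0 = 0 := by rw [Equiv.Perm.inv_eq_iff_eq, hp.1.2]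
    ext x
    · simp [h0, h1, Equiv.Perm.mul_apply]
    · simp [h0, h1]; exact h1
  · intro τ _
    simp only [Units.smul_def, zsmul_eq_mul]
    have key : (Equiv.addRight (τ⁻¹ 0) : Perm (ZMod n)) * Equiv.addRight (-(τ⁻¹ 0)) = 1 := by
      ext x; simp [Equiv.Perm.mul_apply]
    rw [mul_assoc, key, mul_one]
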